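/- Let g be a real Lie algebra admitting a direct sum decomposition g = h ⊕ m of vector subspaces, with linear projections P_h : g → h and P_m : g → m. Fix v ∈ m. For n ≥ 0 and X ∈ m define T_n(X) = Σ_{i=0}^{n} (−1)^i C(n,i) B_{n,i}(X), where B_{n,i}(X) denotes the iterated bracket of X with v taken n+2 times in which each bracket is followed by the projection P_m, except the (i+1)-st bracket, which is followed by the projection P_h. Then for every n ≥ 0 and every X ∈ m, T_{n+2}(X) = P_m[P_m[T_n(X), v], v] − 2·P_m[T_n(P_m[X, v]), v] + T_n(P_m[P_m[X, v], v]). -/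

import Mathlib

private lemma pascal_step {M : Type*} [AddCommGroup M] [Module ℝ M] (m : ℕ) (u : ℕ → M) :
    ∑ i ∈ Finset.range (m + 2), ((m + 1).choose i : ℝ) • u i
      = ∑ i ∈ Finset.range (m + 1), (m.choose i : ℝ) • u i
        + ∑ i ∈ Finset.range (m + 1), (m.choose i : ℝ) • u (i + 1) := by
  rw [Finset.sum_range_succ' (fun i => ((m + 1).choose i : ℝ) • u i) (m + 1)]
  rw [Finset.sum_range_succ' (fun i => (m.choose i : ℝ) • u i) m]
  have h1 : ∀ i : ℕ, (((m + 1).choose (i + 1) : ℝ)) • u (i + 1)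
      = (m.choose i : ℝ) • u (i + 1) + (m.choose (i + 1) : ℝ) • u (i + 1) := by
    intro i
    rw [Nat.choose_succ_succ, Nat.cast_add, add_smul]
  simp only [h1, Finset.sum_add_distrib]
  have h2 : ∑ i ∈ Finset.range (m + 1), (m.choose (i + 1) : ℝ) • u (i + 1)
      = ∑ i ∈ Finset.range m, (m.choose (i + 1) : ℝ) • u (i + 1) := by
    rw [Finset.sum_range_succ]
    simp
  rw [h2]
  simp only [Nat.choose_zero_right, Nat.cast_one, one_smul]
  abel

private lemma pascal_two {M : Type*} [AddCommGroup M] [Module ℝ M] (n : ℕ) (u : ℕ → M) :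
    ∑ i ∈ Finset.range (n + 3), ((n + 2).choose i : ℝ) • u i
      = ∑ i ∈ Finset.range (n + 1), (n.choose i : ℝ) • u i
        + (2 : ℝ) • ∑ i ∈ Finset.range (n + 1), (n.choose i : ℝ) • u (i + 1)
        + ∑ i ∈ Finset.range (n + 1), (n.choose i : ℝ) • u (i + 2) := by
  have e1 : ∑ i ∈ Finset.range (n + 3), ((n + 2).choose i : ℝ) • u i
      = ∑ i ∈ Finset.range (n + 2), ((n + 1).choose i : ℝ) • u i
        + ∑ i ∈ Finset.range (n + 2), ((n + 1).choose i : ℝ) • u (i + 1) :=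
    pascal_step (n + 1) u
  have e2 := pascal_step n u
  have e3 := pascal_step n (fun i => u (i + 1))
  beta_reduce at e3
  have h12 : ∀ i : ℕ, i + 1 + 1 = i + 2 := fun i => by omega
  simp only [h12] at e3
  rw [e1, e2, e3, two_smul]
  abel

/-- Let `g` be a real Lie algebra with a direct sum decomposition `g = h ⊕ m` into vector
subspaces, with linear projections `P_h`, `P_m`. Fix `v ∈ m`. For `n ≥ 0` and `X ∈ m` set
`T n X = Σ_{i=0}^{n} (−1)^i C(n,i) B n i X`, where `B n i X` is the iterated bracket of `X`
with `v` taken `n+2` times, each bracket followed by the projection `P_m` except the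
`(i+1)`-st, which is followed by `P_h`.  Then
`T (n+2) X = P_m[P_m[T n X, v], v] − 2 P_m[T n (P_m[X,v]), v] + T n (P_m[P_m[X,v],v])`. -/
theorem stmt_3 {g : Type*} [LieRing g] [LieAlgebra ℝ g]
    (h m : Submodule ℝ g) (hcompl : IsCompl h m)
    (Ph Pm : g →ₗ[ℝ] g)
    (hPh_mem : ∀ x, Ph x ∈ h) (hPm_mem : ∀ x, Pm x ∈ m)
    (hsum : ∀ x, Ph x + Pm x = x)
    (hPh_id : ∀ x ∈ h, Ph x = x) (hPm_id : ∀ x ∈ m, Pm x = x)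
    (v : g) (hv : v ∈ m)
    (B : ℕ → ℕ → g → g)
    (hB : ∀ n i X, B n i X =
      (fun y => Pm ⁅y, v⁆)^[n + 1 - i] (Ph ⁅(fun y => Pm ⁅y, v⁆)^[i] X, v⁆))
    (T : ℕ → g → g)
    (hT : ∀ n X, T n X =
      ∑ i ∈ Finset.range (n + 1), ((-1 : ℝ) ^ i * (n.choose i : ℝ)) • B n i X) :
    ∀ n : ℕ, ∀ X ∈ m,
      T (n + 2) X =
        Pm ⁅Pm ⁅T n X, v⁆, v⁆ - (2 : ℝ) • Pm ⁅T n (Pm ⁅X, v⁆), v⁆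
          + T n (Pm ⁅Pm ⁅X, v⁆, v⁆) := by
  intro n X _hX
  set L : g →ₗ[ℝ] g :=
    { toFun := fun y => Pm ⁅y, v⁆
      map_add' := fun x y => by simp [add_lie]
      map_smul' := fun c x => by simp [smul_lie] } with hL
  have hLiter : ∀ (k : ℕ) (y : g), (fun y => Pm ⁅y, v⁆)^[k] y = (L ^ k) y := by
    intro k y
    rw [show (fun y => Pm ⁅y, v⁆) = ⇑L from rfl, Module.End.pow_apply]
  have hB' : ∀ n i X, B n i X = (L ^ (n + 1 - i)) (Ph ⁅(L ^ i) X, v⁆) := by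
    intro n i X
    rw [hB]
    simp only [hLiter]
  have hpow1 : ∀ (j : ℕ) (y : g), L ((L ^ j) y) = (L ^ (j + 1)) y := by
    intro j y
    rw [pow_succ', Module.End.mul_apply]
  have hpow2 : ∀ (i : ℕ) (x : g), (L ^ i) (L x) = (L ^ (i + 1)) x := by
    intro i x
    rw [pow_succ, Module.End.mul_apply]
  set u : ℕ → g := fun k => ((-1 : ℝ) ^ k) • (L ^ (n + 3 - k)) (Ph ⁅(L ^ k) X, v⁆) with hu
  have hLHS : T (n + 2) X = ∑ i ∈ Finset.range (n + 3), ((n + 2).choose i : ℝ) • u i := by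
    rw [hT]
    apply Finset.sum_congr rfl
    intro i _
    rw [hB']
    simp only [hu]
    rw [show n + 2 + 1 - i = n + 3 - i from by omega, smul_smul]
    congr 1
    ring
  have hLT : ∀ (Y : g), L (T n Y) = ∑ i ∈ Finset.range (n + 1),
      ((-1 : ℝ) ^ i * (n.choose i : ℝ)) • L (B n i Y) := by
    intro Y
    rw [hT, map_sum]
    simp only [map_smul]
  have hR1 : Pm ⁅Pm ⁅T n X, v⁆, v⁆
      = ∑ i ∈ Finset.range (n + 1), (n.choose i : ℝ) • u i := by
    have e : Pm ⁅Pm ⁅T n X, v⁆, v⁆ = L (L (T n X)) := rfl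
    rw [e, hLT, map_sum]
    apply Finset.sum_congr rfl
    intro i hi
    simp only [Finset.mem_range] at hi
    rw [map_smul, hB', hpow1, hpow1]
    simp only [hu]
    rw [show n + 1 - i + 1 + 1 = n + 3 - i from by omega, smul_smul]
    congr 1
    ring
  have hR2 : Pm ⁅T n (Pm ⁅X, v⁆), v⁆
      = -∑ i ∈ Finset.range (n + 1), (n.choose i : ℝ) • u (i + 1) := by
    have e : Pm ⁅T n (Pm ⁅X, v⁆), v⁆ = L (T n (L X)) := rfl
    rw [e, hLT, ← Finset.sum_neg_distrib]
    apply Finset.sum_congr rfl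
    intro i hi
    simp only [Finset.mem_range] at hi
    rw [hB', hpow2, hpow1]
    simp only [hu]
    rw [show n + 3 - (i + 1) = n + 1 - i + 1 from by omega, smul_smul, ← neg_smul]
    congr 1
    ring
  have hR3 : T n (Pm ⁅Pm ⁅X, v⁆, v⁆)
      = ∑ i ∈ Finset.range (n + 1), (n.choose i : ℝ) • u (i + 2) := by
    have e : Pm ⁅Pm ⁅X, v⁆, v⁆ = L (L X) := rfl
    rw [e, hT]
    apply Finset.sum_congr rfl
    intro i hi
    simp only [Finset.mem_range] at hi
    rw [hB', hpow2, hpow2]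
    simp only [hu]
    rw [show n + 3 - (i + 2) = n + 1 - i from by omega, smul_smul]
    congr 1
    ring
  rw [hLHS, hR1, hR2, hR3, pascal_two n u, smul_neg]
  abel
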